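/- Let ρ₂ be a regular cardinal, ρ₃ a cardinal with ω ≤ ρ₃ ≤ ρ₂, ρ₄ a regular infinite cardinal with ρ₄ ≤ ρ₃, and ρ₁ a cardinal with ρ₂ ≤ ρ₁ < ρ₂^{+ρ₄} (the ρ₄-th successor of ρ₂). Then cov(ρ₁, ρ₂, ρ₃, ρ₄) ≤ ρ₁ (hence equals ρ₁ when ρ₁ > ρ₂ or ρ₄ ≤ cf(ρ₁) < ρ₃). -/

import Mathlib

open Cardinal

noncomputable section

/-- The covering number `cov(ρ₁, ρ₂, ρ₃, ρ₄)`: least cardinality of `X ⊆ P_{ρ₂}(ρ₁)`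
such that every `b ∈ P_{ρ₃}(ρ₁)` is covered by the union of fewer than `ρ₄` members of `X`. -/
def cov (r1 r2 r3 r4 : Cardinal) : Cardinal :=
  sInf { c | ∃ X : Set (Set r1.out),
    (∀ x ∈ X, #x < r2) ∧
    (∀ b : Set r1.out, #b < r3 → ∃ Q : Set (Set r1.out), Q ⊆ X ∧ #Q < r4 ∧ b ⊆ ⋃₀ Q) ∧
    #X = c }

/-- The meeting number `m(ρ, λ)`. -/
def meet (ρ lam : Cardinal) : Cardinal :=
  sInf { c | ∃ Q : Set (Set lam.out),
    (∀ q ∈ Q, #q = ρ) ∧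
    (∀ b : Set lam.out, #b = ρ → ∃ q ∈ Q, #(↥(b ∩ q)) = ρ) ∧
    #Q = c }

/-- The density number `d(ρ, λ)`. -/
def dens (ρ lam : Cardinal) : Cardinal :=
  sInf { c | ∃ Q : Set (Set lam.out),
    (∀ q ∈ Q, #q = ρ) ∧
    (∀ b : Set lam.out, #b = ρ → ∃ q ∈ Q, q ⊆ b) ∧
    #Q = c }

/-- `ds(f)` for `f : λ → ρ`. -/
def ds (ρ lam : Cardinal) (f : lam.out → ρ.out) : Cardinal :=
  sInf { c | ∃ Z : Set (Set lam.out),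
    (∀ z ∈ Z, #z = ρ) ∧
    (∀ B : Set lam.out, (∀ α : ρ.out, #(↥(B ∩ f ⁻¹' {α})) = lam) →
      ∃ z ∈ Z, #(↥(f '' (z ∩ B))) = ρ) ∧
    #Z = c }

/-- The Džamonja–Shelah number `DS(ρ, λ) = sup { ds(f) : f : λ → ρ }`. -/
def DS (ρ lam : Cardinal) : Cardinal := ⨆ f : lam.out → ρ.out, ds ρ lam f

/-- Cofinality of a cardinal. -/
def cf (c : Cardinal) : Cardinal := c.ord.cof

/-- `u(σ, λ) = cov(λ, σ, σ, ω)`. -/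
def u (σ lam : Cardinal) : Cardinal := cov lam σ σ ℵ₀

/-- The `o`-th iterated cardinal successor of `c`. -/
def succIter (c : Cardinal) (o : Ordinal) : Cardinal :=
  Cardinal.preAleph (Cardinal.preAleph.symm c + o)


lemma aux_cof_lt (r2 r4 : Cardinal) (hreg : r2.ord.cof = r2) (h2 : ℵ₀ ≤ r2)
    {c : Cardinal} (hc2 : r2 ≤ c) (hc : c < succIter r2 r4.ord)
    (hsing : c.ord.cof < c) : c.ord.cof < r4 := by
  set e₂ := preAleph.symm r2 with he₂
  have hσ : preAleph.symm c < e₂ + r4.ord := by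
    have := preAleph.symm.lt_iff_lt.mpr hc
    rwa [succIter, OrderIso.symm_apply_apply] at this
  have hσ2 : e₂ ≤ preAleph.symm c := preAleph.symm.le_iff_le.mpr hc2
  set δ := preAleph.symm c - e₂ with hδdef
  have hδ : e₂ + δ = preAleph.symm c := Ordinal.add_sub_cancel_of_le hσ2
  have hcδ : c = preAleph (e₂ + δ) := by
    rw [hδ, OrderIso.apply_symm_apply]
  have hδ4 : δ < r4.ord := by
    have h := hδ ▸ hσ
    exact (add_lt_add_iff_left e₂).mp h
  rcases Ordinal.zero_or_succ_or_isSuccLimit δ with h0 | ⟨γ, hγ⟩ | hlim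
  · exfalso
    rw [h0, add_zero] at hcδ
    have hcr : c = r2 := by rw [hcδ, he₂, OrderIso.apply_symm_apply]
    rw [hcr, hreg] at hsing
    exact lt_irrefl _ hsing
  · exfalso
    rw [← hγ, Ordinal.add_succ, preAleph_succ] at hcδ
    have hr : Cardinal.IsRegular c := by
      rw [hcδ]
      refine isRegular_succ ?_
      refine h2.trans ?_
      calc r2 = preAleph e₂ := by rw [he₂, OrderIso.apply_symm_apply]
        _ ≤ preAleph (e₂ + γ) := preAleph_le_preAleph.mpr le_self_add
    exact hsing.ne ((Ordinal.cof_ord_le c).antisymm hr.2)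
  · have h1 : c.ord.cof = δ.cof := by
      rw [hcδ, ord_preAleph, Ordinal.cof_preOmega (Ordinal.isSuccLimit_add e₂ hlim).isSuccPrelimit,
        Ordinal.cof_add _ (zero_lt_one.trans (Ordinal.one_lt_of_isSuccLimit hlim)).ne']
    rw [h1]
    exact (Ordinal.cof_le_card δ).trans_lt (Cardinal.lt_ord.mp hδ4)

lemma cov_aux (r1 r2 r3 r4 : Cardinal) (hreg : r2.ord.cof = r2) (h2 : ℵ₀ ≤ r2)
    (h32 : r3 ≤ r2) (h4reg : r4.ord.cof = r4) (h4 : ℵ₀ ≤ r4) (c : Cardinal) :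
    c < succIter r2 r4.ord → ∀ S : Set r1.out, #S = c →
    ∃ X : Set (Set r1.out), (∀ x ∈ X, #x < r2) ∧ #X ≤ max c 1 ∧
      ∀ b : Set r1.out, b ⊆ S → #b < r3 →
        ∃ Q : Set (Set r1.out), Q ⊆ X ∧ #Q < r4 ∧ b ⊆ ⋃₀ Q := by
  induction c using WellFoundedLT.induction with
  | ind c IH => ?_
  intro hc S hS
  by_cases hsmall : c < r2
  · refine ⟨{S}, ?_, ?_, ?_⟩
    · intro x hx
      rw [Set.mem_singleton_iff] at hx
      rw [hx, hS]; exact hsmall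
    · rw [Cardinal.mk_singleton]; exact le_max_right _ _
    · intro b hb _
      refine ⟨{S}, subset_rfl, ?_, by simpa using hb⟩
      rw [Cardinal.mk_singleton]
      exact Cardinal.one_lt_aleph0.trans_le h4
  push_neg at hsmall
  have hc0 : ℵ₀ ≤ c := h2.trans hsmall
  have h1c : (1 : Cardinal) ≤ c := le_trans (by norm_num) hc0
  have hmk : #↥S = #c.ord.ToType := by
    rw [hS, Cardinal.mk_toType, Cardinal.card_ord]
  obtain ⟨e⟩ := Cardinal.eq.mp hmk
  set seg : c.ord.ToType → Set r1.out :=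
    fun x => Subtype.val '' (e ⁻¹' Set.Iic x) with hsegdef
  have hsegcard : ∀ x, #(seg x) < c := by
    intro x
    have h1 : #(seg x) = #(e ⁻¹' Set.Iic x) :=
      Cardinal.mk_image_eq Subtype.val_injective
    have h2' : #(e ⁻¹' Set.Iic x) ≤ #(Set.Iic x) :=
      Cardinal.mk_preimage_of_injective e _ e.injective
    have h3 : #(Set.Iic x) ≤ #(Set.Iio x) + 1 := by
      refine le_trans (Cardinal.mk_le_mk_of_subset (show Set.Iic x ⊆ insert x (Set.Iio x) by
        intro y hy
        rcases lt_or_eq_of_le (Set.mem_Iic.mp hy) with h | h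
        · exact Set.mem_insert_iff.mpr (Or.inr h)
        · exact Set.mem_insert_iff.mpr (Or.inl h))) ?_
      exact Cardinal.mk_insert_le
    have h5 : #(Set.Iio x) < c := Cardinal.mk_Iio_ord_toType x
    rw [h1]
    refine lt_of_le_of_lt (h2'.trans h3) ?_
    exact Cardinal.add_lt_of_lt hc0 h5 (Cardinal.one_lt_aleph0.trans_le hc0)
  have hfam : ∀ x : c.ord.ToType, ∃ X : Set (Set r1.out),
      (∀ s ∈ X, #s < r2) ∧ #X ≤ max #(seg x) 1 ∧
      ∀ b : Set r1.out, b ⊆ seg x → #b < r3 →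
        ∃ Q : Set (Set r1.out), Q ⊆ X ∧ #Q < r4 ∧ b ⊆ ⋃₀ Q :=
    fun x => IH #(seg x) (hsegcard x) ((hsegcard x).trans hc) (seg x) rfl
  choose F hF1 hF2 hF3 using hfam
  have hsub : ∀ x, F x ⊆ ⋃ y, F y := fun x => Set.subset_iUnion F x
  refine ⟨⋃ x, F x, ?_, ?_, ?_⟩
  · intro s hs
    obtain ⟨x, hx⟩ := Set.mem_iUnion.mp hs
    exact hF1 x s hx
  · refine le_trans Cardinal.mk_iUnion_le_sum_mk ?_
    refine le_trans (Cardinal.sum_le_mk_mul_iSup _) ?_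
    have hT : #c.ord.ToType = c := by rw [Cardinal.mk_toType, Cardinal.card_ord]
    have hsup : ⨆ x, #(F x) ≤ c := by
      rcases isEmpty_or_nonempty c.ord.ToType with hE | hN
      · simp [ciSup_of_empty]
      · exact ciSup_le' fun x => (hF2 x).trans
          (max_le (hsegcard x).le h1c)
    calc #c.ord.ToType * ⨆ x, #(F x) ≤ c * c := by
          rw [hT]; exact mul_le_mul_right hsup _
      _ = c := Cardinal.mul_eq_self hc0
      _ ≤ max c 1 := le_max_left _ _
  · intro b hbS hb3
    by_cases hcof : c.ord.cof < r4
    · obtain ⟨A, hA, hAcard⟩ := Order.exists_cof_eq (α := c.ord.ToType)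
      have hAlt : #A < r4 := by
        rw [hAcard, Ordinal.cof_toType]; exact hcof
      have hQ : ∀ a : A, ∃ Q : Set (Set r1.out), Q ⊆ F a.1 ∧ #Q < r4 ∧
          (b ∩ seg a.1) ⊆ ⋃₀ Q :=
        fun a => hF3 a.1 (b ∩ seg a.1) Set.inter_subset_right
          ((Cardinal.mk_le_mk_of_subset Set.inter_subset_left).trans_lt hb3)
      choose Qf hQ1 hQ2 hQ3 using hQ
      refine ⟨⋃ a, Qf a, ?_, ?_, ?_⟩
      · exact Set.iUnion_subset fun a => (hQ1 a).trans (hsub a.1)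
      · refine lt_of_le_of_lt Cardinal.mk_iUnion_le_sum_mk ?_
        exact Cardinal.sum_lt_of_isRegular ⟨h4, h4reg.ge⟩ hAlt hQ2
      · intro p hp
        have hpS : p ∈ S := hbS hp
        obtain ⟨a, haA, hay⟩ := hA (e ⟨p, hpS⟩)
        have hpseg : p ∈ seg a := ⟨⟨p, hpS⟩, hay, rfl⟩
        obtain ⟨t, ht, hpt⟩ := hQ3 ⟨a, haA⟩ ⟨hp, hpseg⟩
        exact ⟨t, Set.mem_iUnion.mpr ⟨⟨a, haA⟩, ht⟩, hpt⟩
    · have hcreg : c.ord.cof = c := by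
        by_contra hne
        exact hcof (aux_cof_lt r2 r4 hreg h2 hsmall hc
          (lt_of_le_of_ne (Ordinal.cof_ord_le c) hne))
      have hbT : #(e '' (Subtype.val ⁻¹' b)) <
          Order.cof c.ord.ToType := by
        rw [Ordinal.cof_toType, hcreg]
        calc #(e '' (Subtype.val ⁻¹' b)) = #(Subtype.val ⁻¹' b) :=
              Cardinal.mk_image_eq e.injective
          _ ≤ #b := Cardinal.mk_preimage_of_injective _ _ Subtype.val_injective
          _ < r3 := hb3
          _ ≤ c := h32.trans hsmall
      obtain ⟨x, hx⟩ := not_isCofinal_iff.mp (fun h => not_lt_of_ge (Order.cof_le h) hbT)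
      have hbseg : b ⊆ seg x := by
        intro p hp
        have hpS : p ∈ S := hbS hp
        have : e ⟨p, hpS⟩ < x := hx _ ⟨⟨p, hpS⟩, hp, rfl⟩
        exact ⟨⟨p, hpS⟩, this.le, rfl⟩
      obtain ⟨Q, hQ1, hQ2, hQ3⟩ := hF3 x b hbseg hb3
      exact ⟨Q, hQ1.trans (hsub x), hQ2, hQ3⟩

theorem stmt14 (r1 r2 r3 r4 : Cardinal) (hreg : cf r2 = r2) (h2 : ℵ₀ ≤ r2)
    (h3 : ℵ₀ ≤ r3) (h32 : r3 ≤ r2) (h4reg : cf r4 = r4) (h4 : ℵ₀ ≤ r4) (h43 : r4 ≤ r3)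
    (h21 : r2 ≤ r1) (h1 : r1 < succIter r2 r4.ord) :
    cov r1 r2 r3 r4 ≤ r1 ∧
      ((r2 < r1 ∨ (r4 ≤ cf r1 ∧ cf r1 < r3)) → cov r1 r2 r3 r4 = r1) := by
  have h1r1 : (1 : Cardinal) ≤ r1 := le_trans (by norm_num) (h2.trans h21)
  have hr1 : #(Set.univ : Set r1.out) = r1 := by
    rw [Cardinal.mk_univ]; exact Cardinal.mk_out r1
  obtain ⟨X, hX1, hX2, hX3⟩ :=
    cov_aux r1 r2 r3 r4 hreg h2 h32 h4reg h4 r1 h1 Set.univ hr1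
  have hXmem : #X ∈ { c | ∃ X' : Set (Set r1.out),
      (∀ x ∈ X', #x < r2) ∧
      (∀ b : Set r1.out, #b < r3 → ∃ Q : Set (Set r1.out), Q ⊆ X' ∧ #Q < r4 ∧ b ⊆ ⋃₀ Q) ∧
      #X' = c } :=
    ⟨X, hX1, fun b hb => hX3 b (Set.subset_univ b) hb, rfl⟩
  have hcovle : cov r1 r2 r3 r4 ≤ #X := csInf_le' hXmem
  have hX2' : #X ≤ r1 := hX2.trans (by rw [max_eq_left h1r1])
  refine ⟨hcovle.trans hX2', ?_⟩
  intro hdisj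
  refine le_antisymm (hcovle.trans hX2') ?_
  have h21' : r2 < r1 := by
    rcases hdisj with h | ⟨hr4, hr3⟩
    · exact h
    · rcases lt_or_eq_of_le h21 with h | h
      · exact h
      · exfalso
        rw [← h] at hr3
        have : cf r2 = r2 := hreg
        rw [this] at hr3
        exact absurd hr3 (not_lt.mpr h32)
  refine le_csInf ⟨#X, hXmem⟩ ?_
  rintro cX ⟨Y, hY1, hY2, rfl⟩
  by_contra hlt
  push_neg at hlt
  have hU : #(⋃₀ Y) < r1 := by
    rcases Set.eq_empty_or_nonempty Y with hE | hN
    · rw [hE, Set.sUnion_empty]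
      simpa using Cardinal.aleph0_pos.trans_le (h2.trans h21)
    · haveI : Nonempty Y := hN.to_subtype
      refine (Cardinal.mk_sUnion_le Y).trans_lt ?_
      refine Cardinal.mul_lt_of_lt (h2.trans h21) hlt ?_
      have hsup : (⨆ s : ↥Y, #↥(s.1)) ≤ r2 := ciSup_le' fun s => (hY1 s.1 s.2).le
      exact hsup.trans_lt h21'
  have hne : ⋃₀ Y ≠ Set.univ := by
    intro hEq
    rw [hEq, hr1] at hU
    exact lt_irrefl _ hU
  obtain ⟨p, hp⟩ := (Set.ne_univ_iff_exists_notMem _).mp hne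
  obtain ⟨Q, hQY, hQ4, hQcov⟩ := hY2 {p}
    (by rw [Cardinal.mk_singleton]; exact Cardinal.one_lt_aleph0.trans_le h3)
  exact hp (Set.sUnion_mono hQY (hQcov (Set.mem_singleton p)))
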